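/- Main theorem (deterministic part combined with concentration): Let θ̂ minimize R̂(θ) + ρ‖w ⊙ θ‖₁ with ρ = n^{−γ}, γ ∈ (0, 1/2), where R(θ) − R̂(θ) = gᵀθ + c with g = (E_n[z_1],...,E_n[z_R]), each z_k an average of n i.i.d. mean-zero variables in [−Y, Y], and w₀ = min_k w_k > 0. Then with probability at least 1 − 2R exp(−w₀² n^{1−2γ}/(2Y²)), R(θ̂) ≤ R(θ⋆) + 2 n^{−γ} ‖w ⊙ θ⋆‖₁, where θ⋆ minimizes R. -/

import Mathlib

open MeasureTheory ProbabilityTheory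

lemma mgf_le_of_bounded' {Ω : Type*} [MeasurableSpace Ω] (μ : Measure Ω) [IsProbabilityMeasure μ]
    (X : Ω → ℝ) (hX : Measurable X) (Y t : ℝ) (hY : 0 < Y)
    (hb : ∀ᵐ ω ∂μ, X ω ∈ Set.Icc (-Y) Y) (hm : (∫ ω, X ω ∂μ) = 0) :
    mgf X μ t ≤ Real.exp (t ^ 2 * Y ^ 2 / 2) := by
  have hintX : Integrable X μ :=
    (integrable_const Y).mono' hX.aestronglyMeasurable
      (hb.mono fun ω h => by rw [Real.norm_eq_abs]; exact abs_le.2 ⟨h.1, h.2⟩)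
  set c1 := Real.exp (-(t * Y)) with hc1
  set c2 := Real.exp (t * Y) with hc2
  have hpt : ∀ᵐ ω ∂μ, Real.exp (t * X ω) ≤ (c1 + c2) / 2 + X ω * ((c2 - c1) / (2 * Y)) := by
    filter_upwards [hb] with ω h
    have ha : 0 ≤ (Y - X ω) / (2 * Y) := div_nonneg (by linarith [h.2]) (by linarith)
    have hb' : 0 ≤ (Y + X ω) / (2 * Y) := div_nonneg (by linarith [h.1]) (by linarith)
    have hab : (Y - X ω) / (2 * Y) + (Y + X ω) / (2 * Y) = 1 := by field_simp; ring
    have hconv := convexOn_exp.2 (Set.mem_univ (-(t * Y))) (Set.mem_univ (t * Y)) ha hb' hab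
    simp only [smul_eq_mul] at hconv
    have harg : (Y - X ω) / (2 * Y) * (-(t * Y)) + (Y + X ω) / (2 * Y) * (t * Y) = t * X ω := by
      field_simp; ring
    rw [harg] at hconv
    refine hconv.trans_eq ?_
    field_simp
    rw [hc1, hc2, mul_comm t Y]; ring
  have hintexp : Integrable (fun ω => Real.exp (t * X ω)) μ := by
    refine (integrable_const (Real.exp (|t| * Y))).mono'
      ((hX.const_mul t).exp).aestronglyMeasurable ?_
    filter_upwards [hb] with ω h
    rw [Real.norm_eq_abs, abs_of_pos (Real.exp_pos _), Real.exp_le_exp]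
    calc t * X ω ≤ |t * X ω| := le_abs_self _
      _ = |t| * |X ω| := abs_mul _ _
      _ ≤ |t| * Y := by
          have := abs_le.2 ⟨h.1, h.2⟩
          exact mul_le_mul_of_nonneg_left this (abs_nonneg t)
  have hle : mgf X μ t ≤ ∫ ω, ((c1 + c2) / 2 + X ω * ((c2 - c1) / (2 * Y))) ∂μ :=
    integral_mono_ae hintexp ((integrable_const _).add (hintX.mul_const _)) hpt
  rw [integral_add (integrable_const _) (hintX.mul_const _), integral_const,
    integral_mul_const, hm, probReal_univ] at hle
  simp only [ENNReal.toReal_one, one_smul, smul_eq_mul, zero_mul, add_zero] at hle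
  calc mgf X μ t ≤ (c1 + c2) / 2 := by linarith
    _ = Real.cosh (t * Y) := by rw [Real.cosh_eq]; ring
    _ ≤ Real.exp ((t * Y) ^ 2 / 2) := Real.cosh_le_exp_half_sq _
    _ = Real.exp (t ^ 2 * Y ^ 2 / 2) := by ring_nf

lemma sum_tail' {Ω : Type*} [MeasurableSpace Ω] (μ : Measure Ω) [IsProbabilityMeasure μ]
    (n : ℕ) (hn : 0 < n) (Y ε : ℝ) (hY : 0 < Y) (hε : 0 < ε) (z : Fin n → Ω → ℝ)
    (hmeas : ∀ i, Measurable (z i)) (hindep : iIndepFun z μ)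
    (hbdd : ∀ i, ∀ᵐ ω ∂μ, z i ω ∈ Set.Icc (-Y) Y) (hmean : ∀ i, (∫ ω, z i ω ∂μ) = 0) :
    (μ {ω | ε ≤ |∑ i, z i ω|}).toReal ≤ 2 * Real.exp (-ε ^ 2 / (2 * n * Y ^ 2)) := by
  have hn0 : (0:ℝ) < n := by exact_mod_cast hn
  set t : ℝ := ε / (n * Y ^ 2) with ht
  have ht0 : 0 < t := div_pos hε (by positivity)
  -- integrability of exp(s * z i) for any s
  have hint : ∀ (s : ℝ) i, Integrable (fun ω => Real.exp (s * z i ω)) μ := by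
    intro s i
    refine (integrable_const (Real.exp (|s| * Y))).mono'
      (((hmeas i).const_mul s).exp).aestronglyMeasurable ?_
    filter_upwards [hbdd i] with ω h
    rw [Real.norm_eq_abs, abs_of_pos (Real.exp_pos _), Real.exp_le_exp]
    calc s * z i ω ≤ |s * z i ω| := le_abs_self _
      _ = |s| * |z i ω| := abs_mul _ _
      _ ≤ |s| * Y := mul_le_mul_of_nonneg_left (abs_le.2 ⟨h.1, h.2⟩) (abs_nonneg s)
  have hmgf : ∀ s : ℝ, mgf (∑ i, z i) μ s ≤ Real.exp (n * (s ^ 2 * Y ^ 2 / 2)) := by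
    intro s
    rw [hindep.mgf_sum hmeas]
    calc ∏ i, mgf (z i) μ s ≤ ∏ _i : Fin n, Real.exp (s ^ 2 * Y ^ 2 / 2) :=
          Finset.prod_le_prod (fun i _ => mgf_nonneg)
            (fun i _ => mgf_le_of_bounded' μ (z i) (hmeas i) Y s hY (hbdd i) (hmean i))
      _ = Real.exp (s ^ 2 * Y ^ 2 / 2) ^ n := by
          rw [Finset.prod_const, Finset.card_univ, Fintype.card_fin]
      _ = Real.exp (n * (s ^ 2 * Y ^ 2 / 2)) := by
          rw [← Real.exp_nat_mul]
  have hexp : Real.exp (-t * ε) * Real.exp (n * (t ^ 2 * Y ^ 2 / 2)) =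
      Real.exp (-ε ^ 2 / (2 * n * Y ^ 2)) := by
    rw [← Real.exp_add]
    congr 1
    rw [ht]
    field_simp
    ring
  have hintsum : ∀ s : ℝ, Integrable (fun ω => Real.exp (s * (∑ i, z i) ω)) μ :=
    fun s => iIndepFun.integrable_exp_mul_sum hindep hmeas (fun i _ => hint s i)
  have h1 : (μ {ω | ε ≤ (∑ i, z i) ω}).toReal ≤ Real.exp (-ε ^ 2 / (2 * n * Y ^ 2)) := by
    calc (μ {ω | ε ≤ (∑ i, z i) ω}).toReal
        ≤ Real.exp (-t * ε) * mgf (∑ i, z i) μ t :=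
          measure_ge_le_exp_mul_mgf ε ht0.le (hintsum t)
      _ ≤ Real.exp (-t * ε) * Real.exp (n * (t ^ 2 * Y ^ 2 / 2)) :=
          mul_le_mul_of_nonneg_left (hmgf t) (Real.exp_pos _).le
      _ = _ := hexp
  have h2 : (μ {ω | (∑ i, z i) ω ≤ -ε}).toReal ≤ Real.exp (-ε ^ 2 / (2 * n * Y ^ 2)) := by
    calc (μ {ω | (∑ i, z i) ω ≤ -ε}).toReal
        ≤ Real.exp (-(-t) * (-ε)) * mgf (∑ i, z i) μ (-t) :=
          measure_le_le_exp_mul_mgf (-ε) (by linarith) (hintsum (-t))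
      _ ≤ Real.exp (-t * ε) * Real.exp (n * (t ^ 2 * Y ^ 2 / 2)) := by
          rw [show -(-t) * (-ε) = -t * ε by ring]
          refine mul_le_mul_of_nonneg_left ?_ (Real.exp_pos _).le
          have := hmgf (-t)
          rwa [show (-t) ^ 2 = t ^ 2 by ring] at this
      _ = _ := hexp
  have hsub : {ω | ε ≤ |∑ i, z i ω|} ⊆
      {ω | ε ≤ (∑ i, z i) ω} ∪ {ω | (∑ i, z i) ω ≤ -ε} := by
    intro ω hω
    simp only [Set.mem_setOf_eq] at hω ⊢
    rcases le_abs.1 hω with h | h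
    · left; simpa [Finset.sum_apply] using h
    · right; simp only [Set.mem_setOf_eq, Finset.sum_apply]; linarith
  calc (μ {ω | ε ≤ |∑ i, z i ω|}).toReal
      ≤ ((μ {ω | ε ≤ (∑ i, z i) ω}) + μ {ω | (∑ i, z i) ω ≤ -ε}).toReal := by
        refine ENNReal.toReal_mono ?_ ((measure_mono hsub).trans (measure_union_le _ _))
        exact ENNReal.add_ne_top.2 ⟨measure_ne_top _ _, measure_ne_top _ _⟩
    _ = (μ {ω | ε ≤ (∑ i, z i) ω}).toReal + (μ {ω | (∑ i, z i) ω ≤ -ε}).toReal :=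
        ENNReal.toReal_add (measure_ne_top _ _) (measure_ne_top _ _)
    _ ≤ 2 * Real.exp (-ε ^ 2 / (2 * n * Y ^ 2)) := by linarith

lemma oracle' {R : ℕ} (ρ : ℝ) (hρ : 0 ≤ ρ) (w₀ : ℝ) (hw₀ : 0 ≤ w₀) (w : Fin R → ℝ)
    (hw : ∀ k, w₀ ≤ w k) (g : Fin R → ℝ) (hg : ∀ k, |g k| ≤ w₀ * ρ)
    (Rout Rhat : (Fin R → ℝ) → ℝ) (c : ℝ)
    (haff : ∀ θ, Rout θ - Rhat θ = (∑ k, g k * θ k) + c)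
    (θhat θstar : Fin R → ℝ)
    (hmin : Rhat θhat + ρ * ∑ k, w k * |θhat k| ≤ Rhat θstar + ρ * ∑ k, w k * |θstar k|) :
    Rout θhat ≤ Rout θstar + 2 * ρ * ∑ k, w k * |θstar k| := by
  have key : ∀ θ : Fin R → ℝ, ∑ k, g k * θ k ≤ ρ * ∑ k, w k * |θ k| ∧
      -(∑ k, g k * θ k) ≤ ρ * ∑ k, w k * |θ k| := by
    intro θ
    have habs : ∀ k, |g k * θ k| ≤ ρ * (w k * |θ k|) := by
      intro k
      rw [abs_mul]
      calc |g k| * |θ k| ≤ (w₀ * ρ) * |θ k| :=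
            mul_le_mul_of_nonneg_right (hg k) (abs_nonneg _)
        _ ≤ ρ * (w k * |θ k|) := by
            have h := mul_le_mul_of_nonneg_right
              (mul_le_mul_of_nonneg_right (hw k) hρ) (abs_nonneg (θ k))
            calc w₀ * ρ * |θ k| ≤ w k * ρ * |θ k| := h
              _ = ρ * (w k * |θ k|) := by ring
    constructor
    · calc ∑ k, g k * θ k ≤ ∑ k, |g k * θ k| :=
            Finset.sum_le_sum fun k _ => le_abs_self _
        _ ≤ ∑ k, ρ * (w k * |θ k|) := Finset.sum_le_sum fun k _ => habs k
        _ = ρ * ∑ k, w k * |θ k| := by rw [Finset.mul_sum]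
    · rw [← Finset.sum_neg_distrib]
      calc ∑ k, -(g k * θ k) ≤ ∑ k, |g k * θ k| :=
            Finset.sum_le_sum fun k _ => neg_le_abs _
        _ ≤ ∑ k, ρ * (w k * |θ k|) := Finset.sum_le_sum fun k _ => habs k
        _ = ρ * ∑ k, w k * |θ k| := by rw [Finset.mul_sum]
  obtain ⟨h1, -⟩ := key θhat
  obtain ⟨-, h2⟩ := key θstar
  have e1 := haff θhat
  have e2 := haff θstar
  linarith

theorem main_theorem_regularized_learning
    {Ω : Type*} [MeasurableSpace Ω] (μ : Measure Ω) [IsProbabilityMeasure μ]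
    (R n : ℕ) (hR : 0 < R) (hn : 0 < n)
    (Y γ w₀ : ℝ) (hY : 0 < Y) (hγ : γ ∈ Set.Ioo (0 : ℝ) (1 / 2)) (hw₀ : 0 < w₀)
    (w : Fin R → ℝ) (hw : ∀ k, w₀ ≤ w k)
    (z : Fin R → Fin n → Ω → ℝ)
    (hmeas : ∀ k i, Measurable (z k i))
    (hindep : ∀ k, iIndepFun (z k) μ)
    (hident : ∀ k i j, IdentDistrib (z k i) (z k j) μ μ)
    (hbdd : ∀ k i, ∀ᵐ ω ∂μ, z k i ω ∈ Set.Icc (-Y) Y)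
    (hmean : ∀ k i, (∫ ω, z k i ω ∂μ) = 0)
    (Rout : (Fin R → ℝ) → ℝ) (Rhat : Ω → (Fin R → ℝ) → ℝ)
    (haffine : ∀ ω, ∃ c : ℝ, ∀ θ,
      Rout θ - Rhat ω θ = (∑ k, ((n : ℝ)⁻¹ * ∑ i, z k i ω) * θ k) + c)
    (θhat : Ω → Fin R → ℝ) (θstar : Fin R → ℝ)
    (hθhat : ∀ ω θ,
      Rhat ω (θhat ω) + (n : ℝ) ^ (-γ) * ∑ k, w k * |θhat ω k| ≤
        Rhat ω θ + (n : ℝ) ^ (-γ) * ∑ k, w k * |θ k|)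
    (hθstar : ∀ θ, Rout θstar ≤ Rout θ)
    (hmeasev : MeasurableSet
      {ω | Rout (θhat ω) ≤ Rout θstar + 2 * (n : ℝ) ^ (-γ) * ∑ k, w k * |θstar k|}) :
    1 - 2 * R * Real.exp (-(w₀ ^ 2 * (n : ℝ) ^ (1 - 2 * γ)) / (2 * Y ^ 2)) ≤
      (μ {ω | Rout (θhat ω) ≤
        Rout θstar + 2 * (n : ℝ) ^ (-γ) * ∑ k, w k * |θstar k|}).toReal := by
  have hn0 : (0:ℝ) < n := by exact_mod_cast hn
  set ρ : ℝ := (n : ℝ) ^ (-γ) with hρdef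
  have hρpos : 0 < ρ := Real.rpow_pos_of_pos hn0 _
  set ε : ℝ := w₀ * (n : ℝ) ^ ((1:ℝ) - γ) with hεdef
  have hεpos : 0 < ε := mul_pos hw₀ (Real.rpow_pos_of_pos hn0 _)
  have hpow1 : (n : ℝ) ^ ((1:ℝ) - γ) = ρ * n := by
    rw [hρdef, show (1:ℝ) - γ = -γ + 1 by ring, Real.rpow_add hn0, Real.rpow_one]
  have hpow2 : (n : ℝ) ^ ((1:ℝ) - γ) * (n : ℝ) ^ ((1:ℝ) - γ) = (n : ℝ) ^ (1 - 2*γ) * n := by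
    rw [← Real.rpow_add hn0, show (1:ℝ) - γ + ((1:ℝ) - γ) = (1 - 2*γ) + 1 by ring,
      Real.rpow_add hn0, Real.rpow_one]
  set B : Fin R → Set Ω := fun k => {ω | ε ≤ |∑ i, z k i ω|} with hB
  have htail : ∀ k, (μ (B k)).toReal ≤
      2 * Real.exp (-(w₀ ^ 2 * (n : ℝ) ^ (1 - 2 * γ)) / (2 * Y ^ 2)) := by
    intro k
    refine (sum_tail' μ n hn Y ε hY hεpos (z k) (hmeas k) (hindep k) (hbdd k)
      (hmean k)).trans_eq ?_
    congr 2
    rw [hεdef, mul_pow, pow_two ((n:ℝ) ^ ((1:ℝ) - γ)), hpow2]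
    field_simp
  set s : Set Ω :=
    {ω | Rout (θhat ω) ≤ Rout θstar + 2 * ρ * ∑ k, w k * |θstar k|} with hs
  have hsub : sᶜ ⊆ ⋃ k, B k := by
    intro ω hω
    by_contra hc
    simp only [Set.mem_iUnion, hB, Set.mem_setOf_eq, not_exists, not_le] at hc
    apply hω
    simp only [hs, Set.mem_setOf_eq]
    obtain ⟨c, hcθ⟩ := haffine ω
    refine oracle' ρ hρpos.le w₀ hw₀.le w hw (fun k => (n : ℝ)⁻¹ * ∑ i, z k i ω) ?_
      Rout (Rhat ω) c hcθ (θhat ω) θstar (hθhat ω θstar)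
    intro k
    rw [abs_mul, abs_of_pos (inv_pos.2 hn0)]
    have h1 : |∑ i, z k i ω| ≤ ε := (hc k).le
    calc (n:ℝ)⁻¹ * |∑ i, z k i ω| ≤ (n:ℝ)⁻¹ * ε :=
          mul_le_mul_of_nonneg_left h1 (inv_nonneg.2 hn0.le)
      _ = w₀ * ρ := by
          rw [hεdef, hpow1]
          field_simp
  have hBmeas : ∀ k, MeasurableSet (B k) := by
    intro k
    have : Measurable fun ω => |∑ i, z k i ω| :=
      (Finset.measurable_sum Finset.univ fun i _ => hmeas k i).abs
    exact measurableSet_le measurable_const this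
  have hcompl : (μ sᶜ).toReal ≤
      2 * R * Real.exp (-(w₀ ^ 2 * (n : ℝ) ^ (1 - 2 * γ)) / (2 * Y ^ 2)) := by
    have h1 : μ sᶜ ≤ ∑ k, μ (B k) := by
      refine (measure_mono hsub).trans ?_
      refine (measure_iUnion_le B).trans_eq ?_
      exact tsum_fintype _
    calc (μ sᶜ).toReal ≤ (∑ k, μ (B k)).toReal := by
          refine ENNReal.toReal_mono ?_ h1
          exact (ENNReal.sum_lt_top.2 fun k _ => measure_lt_top _ _).ne
      _ = ∑ k, (μ (B k)).toReal := ENNReal.toReal_sum fun k _ => measure_ne_top _ _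
      _ ≤ ∑ _k : Fin R,
            2 * Real.exp (-(w₀ ^ 2 * (n : ℝ) ^ (1 - 2 * γ)) / (2 * Y ^ 2)) :=
          Finset.sum_le_sum fun k _ => htail k
      _ = 2 * R * Real.exp (-(w₀ ^ 2 * (n : ℝ) ^ (1 - 2 * γ)) / (2 * Y ^ 2)) := by
          rw [Finset.sum_const, Finset.card_univ, Fintype.card_fin, nsmul_eq_mul]
          ring
  have hone : (μ s).toReal + (μ sᶜ).toReal = 1 := by
    rw [← ENNReal.toReal_add (measure_ne_top _ _) (measure_ne_top _ _),
      measure_add_measure_compl hmeasev]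
    simp
  linarith
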